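/- Suppose X and Y are discrete random variables, X taking q possible values and Y taking K possible values, jointly distributed with (A, R) where A ∈ {0,1} and R is a missing indicator. Let Θ_a be the K × q matrix with (k, j) entry f(A=a, X=x_j, Y=y_k, R=1_p). If R ⊥ Y | (A, X), P(R=1_p | A, X, Y) ≥ c > 0, and Θ_a has full column rank q for a = 0 and a = 1, then the joint distribution of (A, X, Y, R) is uniquely determined by the distribution of the observed data (A, X_obs, Y, R). -/

import Mathlib

/-- Proposition 1: with discrete `X` (q values), `Y` (K values), binary
`A`, and a finite set of missing patterns `ℛ` with full pattern `full`, suppose each of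
two joint pmfs satisfies outcome-independent missingness `R ⊥ Y | (A, X)` and
positivity `P(R=full | A, X, Y) ≥ c > 0`.  If the `K × q` matrices `Θ_a` built from
the complete-case probabilities have full column rank for `a = 0, 1`, and the two
joint distributions induce the same observed-data distribution (the distribution of
`(A, X_obs, Y, R)`, where under pattern `r` only the statistic `obs r` of `X` is
observed), then the two joint distributions are equal. -/
theorem discrete_identifiability
    {q K : ℕ} {ℛ : Type*} [Fintype ℛ] (full : ℛ)
    -- observed part of X under each missing pattern; the full pattern observes X itself
    {𝒪 : ℛ → Type*} [∀ r, Fintype (𝒪 r)] [∀ r, DecidableEq (𝒪 r)]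
    (obs : ∀ r : ℛ, Fin q → 𝒪 r)
    (hobs_full : Function.Injective (obs full))
    -- two candidate joint pmfs of (A, X, Y, R)
    (f₁ f₂ : Bool → Fin q → Fin K → ℛ → ℝ)
    (c : ℝ) (hc : 0 < c)
    -- each is a pmf satisfying outcome-independent missingness and positivity:
    -- f(a,x,y,r) = f_{AXY}(a,x,y) · P(R=r | A=a, X=x) with P(full | a, x) ≥ c
    (hmodel : ∀ f ∈ ({f₁, f₂} : Set (Bool → Fin q → Fin K → ℛ → ℝ)),
      (∀ a x y r, 0 ≤ f a x y r) ∧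
      (∑ a : Bool, ∑ x : Fin q, ∑ y : Fin K, ∑ r : ℛ, f a x y r = 1) ∧
      ∃ fAXY : Bool → Fin q → Fin K → ℝ, ∃ pR : ℛ → Bool → Fin q → ℝ,
        (∀ r a x, 0 ≤ pR r a x) ∧ (∀ a x, ∑ r : ℛ, pR r a x = 1) ∧
        (∀ a x, c ≤ pR full a x) ∧
        (∀ a x y r, f a x y r = fAXY a x y * pR r a x))
    -- rank condition: the matrix Θ_a of complete-case probabilities (shared by f₁ and
    -- f₂, since the observed data agree) has full column rank, for a = 0, 1
    (hrank : ∀ a : Bool, ∀ g : Fin q → ℝ,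
      (∀ y : Fin K, ∑ x : Fin q, g x * f₁ a x y full = 0) → g = 0)
    -- the two joint distributions induce the same observed-data distribution
    (hobs_eq : ∀ a : Bool, ∀ r : ℛ, ∀ ω : 𝒪 r, ∀ y : Fin K,
      (∑ x ∈ Finset.univ.filter (fun x => obs r x = ω), f₁ a x y r) =
      (∑ x ∈ Finset.univ.filter (fun x => obs r x = ω), f₂ a x y r)) :
    f₁ = f₂ := by
  obtain ⟨h1nn, h1sum, F1, P1, hP1nn, hP1sum, hP1c, hf1⟩ :=
    hmodel f₁ (Set.mem_insert _ _)
  obtain ⟨h2nn, h2sum, F2, P2, hP2nn, hP2sum, hP2c, hf2⟩ :=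
    hmodel f₂ (Set.mem_insert_of_mem _ rfl)
  have hP1pos : ∀ a x, (0:ℝ) < P1 full a x := fun a x => lt_of_lt_of_le hc (hP1c a x)
  have hP2pos : ∀ a x, (0:ℝ) < P2 full a x := fun a x => lt_of_lt_of_le hc (hP2c a x)
  have hfull : ∀ a x y, f₁ a x y full = f₂ a x y full := by
    intro a x y
    have h := hobs_eq a full (obs full x) y
    have hfil : Finset.univ.filter (fun x' => obs full x' = obs full x) = {x} := by
      ext x'
      simp [hobs_full.eq_iff]
    rw [hfil] at h
    simpa using h
  have hF : ∀ a x y, F1 a x y * P1 full a x = F2 a x y * P2 full a x := by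
    intro a x y
    have h := hfull a x y
    rwa [hf1, hf2] at h
  funext a x y r
  set g : Fin q → ℝ := fun x' =>
    if obs r x' = obs r x then
      (P1 r a x' - P1 full a x' / P2 full a x' * P2 r a x') / P1 full a x' else 0 with hg
  have hg0 : g = 0 := by
    apply hrank a
    intro y'
    have key : ∀ x', g x' * f₁ a x' y' full =
        if obs r x' = obs r x then f₁ a x' y' r - f₂ a x' y' r else 0 := by
      intro x'
      by_cases hx : obs r x' = obs r x
      · simp only [hg, hx, if_true]
        rw [hf1, hf1, hf2]
        have h1 := (hP1pos a x').ne'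
        have h2 := (hP2pos a x').ne'
        field_simp
        linear_combination (-(P2 r a x')) * hF a x' y'
      · simp [hg, hx]
    rw [Finset.sum_congr rfl fun x' _ => key x', ← Finset.sum_filter,
      Finset.sum_sub_distrib, hobs_eq a r (obs r x) y', sub_self]
  have hgx : g x = 0 := by rw [hg0]; rfl
  have hx0 : P1 r a x - P1 full a x / P2 full a x * P2 r a x = 0 := by
    have h := hgx
    simp only [hg, if_pos rfl] at h
    exact (div_eq_zero_iff.mp h).resolve_right (hP1pos a x).ne'
  rw [hf1, hf2]
  have h1 := (hP1pos a x).ne'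
  have h2 := (hP2pos a x).ne'
  have hP : P1 r a x = P1 full a x / P2 full a x * P2 r a x := by linarith
  rw [hP]
  field_simp
  linear_combination P2 r a x * hF a x y
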